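/- Let g_1, …, g_m ∈ ℝ[x] with g = (g_1,…,g_m). Assume that S(g) satisfies the Archimedean condition and that S(g) = ∅. Then −1 ∈ Q(g)[x]. -/

import Mathlib

open MvPolynomial

noncomputable section

/-- `p` is a sum of squares of polynomials. -/
def IsSOS {σ : Type*} (p : MvPolynomial σ ℝ) : Prop :=
  ∃ (k : ℕ) (q : Fin k → MvPolynomial σ ℝ), p = ∑ i, q i ^ 2

/-- Membership in the quadratic module `Q(g)` generated by the tuple `g`. -/
def InQM {σ ι : Type*} [Fintype ι] (g : ι → MvPolynomial σ ℝ) (p : MvPolynomial σ ℝ) : Prop :=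
  ∃ (s0 : MvPolynomial σ ℝ) (s : ι → MvPolynomial σ ℝ),
    IsSOS s0 ∧ (∀ j, IsSOS (s j)) ∧ p = s0 + ∑ j, s j * g j

/-- The basic semi-algebraic set `S(g)`. -/
def Sg {n m : ℕ} (g : Fin m → MvPolynomial (Fin n) ℝ) : Set (Fin n → ℝ) :=
  {x | ∀ j, 0 ≤ eval x (g j)}

/-- `S(g)` satisfies the Archimedean condition. -/
def ArchCond {n m : ℕ} (g : Fin m → MvPolynomial (Fin n) ℝ) : Prop :=
  ∃ R : ℝ, 0 < R ∧ InQM g (C R - ∑ i : Fin n, X i ^ 2)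

namespace PutinarAux

variable {σ : Type*}

lemma sos_zero : IsSOS (0 : MvPolynomial σ ℝ) := ⟨0, ![], by simp⟩

lemma sos_sq (p : MvPolynomial σ ℝ) : IsSOS (p ^ 2) := ⟨1, fun _ => p, by simp⟩

lemma sos_one : IsSOS (1 : MvPolynomial σ ℝ) := by simpa using sos_sq (1 : MvPolynomial σ ℝ)

lemma sos_add {p q : MvPolynomial σ ℝ} (hp : IsSOS p) (hq : IsSOS q) : IsSOS (p + q) := by
  obtain ⟨k, u, rfl⟩ := hp
  obtain ⟨l, v, rfl⟩ := hq
  refine ⟨k + l, Fin.append u v, ?_⟩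
  rw [Fin.sum_univ_add]
  simp [Fin.append_left, Fin.append_right]

lemma sos_sq_mul {s : MvPolynomial σ ℝ} (p : MvPolynomial σ ℝ) (hs : IsSOS s) :
    IsSOS (p ^ 2 * s) := by
  obtain ⟨k, u, rfl⟩ := hs
  refine ⟨k, fun i => p * u i, ?_⟩
  rw [Finset.mul_sum]
  exact Finset.sum_congr rfl fun i _ => by ring

/-- A quadratic module. -/
def QM (M : Set (MvPolynomial σ ℝ)) : Prop :=
  (∀ p, p ^ 2 ∈ M) ∧ (∀ a ∈ M, ∀ b ∈ M, a + b ∈ M) ∧ (∀ p, ∀ a ∈ M, p ^ 2 * a ∈ M)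

variable {M : Set (MvPolynomial σ ℝ)}

lemma QM.sq (hM : QM M) (p : MvPolynomial σ ℝ) : p ^ 2 ∈ M := hM.1 p
lemma QM.add (hM : QM M) {a b : MvPolynomial σ ℝ} (ha : a ∈ M) (hb : b ∈ M) : a + b ∈ M := hM.2.1 a ha b hb
lemma QM.sq_mul (hM : QM M) (p : MvPolynomial σ ℝ) {a : MvPolynomial σ ℝ} (ha : a ∈ M) : p ^ 2 * a ∈ M :=
  hM.2.2 p a ha

lemma QM.zero (hM : QM M) : (0 : MvPolynomial σ ℝ) ∈ M := by simpa using hM.sq 0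
lemma QM.one (hM : QM M) : (1 : MvPolynomial σ ℝ) ∈ M := by simpa using hM.sq 1

lemma QM.sum (hM : QM M) {ι : Type*} {t : Finset ι} {f : ι → MvPolynomial σ ℝ}
    (h : ∀ i ∈ t, f i ∈ M) : ∑ i ∈ t, f i ∈ M := by
  classical
  induction t using Finset.induction_on with
  | empty => simpa using hM.zero
  | insert x s hx ih =>
      rw [Finset.sum_insert hx]
      exact hM.add (h _ (Finset.mem_insert_self _ _))
        (ih fun i hi => h i (Finset.mem_insert_of_mem hi))

lemma QM.sos (hM : QM M) {p : MvPolynomial σ ℝ} (hp : IsSOS p) : p ∈ M := by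
  obtain ⟨k, u, rfl⟩ := hp
  exact hM.sum fun i _ => hM.sq (u i)

lemma QM.sos_mul (hM : QM M) {s a : MvPolynomial σ ℝ} (hs : IsSOS s) (ha : a ∈ M) : s * a ∈ M := by
  obtain ⟨k, u, rfl⟩ := hs
  rw [Finset.sum_mul]
  exact hM.sum fun i _ => hM.sq_mul (u i) ha

lemma QM.const (hM : QM M) {c : ℝ} (hc : 0 ≤ c) : (C c : MvPolynomial σ ℝ) ∈ M := by
  have : (C (Real.sqrt c) : MvPolynomial σ ℝ) ^ 2 = C c := by
    rw [← C_pow, Real.sq_sqrt hc]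
  simpa [this] using hM.sq (C (Real.sqrt c))

lemma QM.cmul (hM : QM M) {c : ℝ} (hc : 0 ≤ c) {a : MvPolynomial σ ℝ} (ha : a ∈ M) :
    (C c : MvPolynomial σ ℝ) * a ∈ M := by
  have : (C (Real.sqrt c) : MvPolynomial σ ℝ) ^ 2 = C c := by
    rw [← C_pow, Real.sq_sqrt hc]
  simpa [this] using hM.sq_mul (C (Real.sqrt c)) ha

lemma QM.neg_one_of_neg_const (hM : QM M) {c : ℝ} (hc : c < 0) (h : (C c : MvPolynomial σ ℝ) ∈ M) :
    (-1 : MvPolynomial σ ℝ) ∈ M := by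
  have h2 : (C (-c)⁻¹ : MvPolynomial σ ℝ) * C c ∈ M := hM.cmul (le_of_lt (by rw [inv_pos]; linarith)) h
  have h3 : (C (-c)⁻¹ : MvPolynomial σ ℝ) * C c = -1 := by
    rw [← C_mul]
    have : (-c)⁻¹ * c = -1 := by
      rw [inv_mul_eq_div, div_neg, div_self hc.ne]
    rw [this]; simp
  rwa [h3] at h2

end PutinarAux

namespace PutinarAux

variable {σ ι : Type*} [Fintype ι] {g : ι → MvPolynomial σ ℝ}

lemma inQM_qm : QM {p | InQM g p} := by
  classical
  refine ⟨?_, ?_, ?_⟩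
  · intro p
    refine ⟨p ^ 2, fun _ => 0, sos_sq p, fun _ => sos_zero, by simp⟩
  · rintro a ⟨s0, s, hs0, hs, rfl⟩ b ⟨t0, t, ht0, ht, rfl⟩
    refine ⟨s0 + t0, fun j => s j + t j, sos_add hs0 ht0,
      fun j => sos_add (hs j) (ht j), ?_⟩
    have : ∑ j : ι, (s j + t j) * g j = ∑ j : ι, s j * g j + ∑ j : ι, t j * g j := by
      rw [← Finset.sum_add_distrib]
      exact Finset.sum_congr rfl fun j _ => by ring
    rw [this]; ring
  · rintro p a ⟨s0, s, hs0, hs, rfl⟩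
    refine ⟨p ^ 2 * s0, fun j => p ^ 2 * s j, sos_sq_mul p hs0,
      fun j => sos_sq_mul p (hs j), ?_⟩
    rw [mul_add, Finset.mul_sum]
    congr 1
    exact Finset.sum_congr rfl fun j _ => by ring

lemma inQM_g (j : ι) : InQM g (g j) := by
  classical
  refine ⟨0, fun j' => if j' = j then 1 else 0, sos_zero, ?_, ?_⟩
  · intro j'; by_cases h : j' = j <;> simp [h, sos_one, sos_zero]
  · simp [ite_mul, Finset.sum_ite_eq']

/-- The collection of proper quadratic modules containing `Q(g)`. -/
def QMs (g : ι → MvPolynomial σ ℝ) : Set (Set (MvPolynomial σ ℝ)) :=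
  {M | QM M ∧ (∀ p, InQM g p → p ∈ M) ∧ (-1 : MvPolynomial σ ℝ) ∉ M}

lemma exists_maximal (hg : ¬ InQM g (-1)) :
    ∃ M, Maximal (· ∈ QMs g) M := by
  have hQ : {p | InQM g p} ∈ QMs g := ⟨inQM_qm, fun p hp => hp, hg⟩
  refine (zorn_subset_nonempty (QMs g) ?_ _ hQ).imp fun M h => h.2
  intro c hc hchain hne
  refine ⟨⋃₀ c, ⟨⟨?_, ?_, ?_⟩, ?_, ?_⟩, fun s hs => Set.subset_sUnion_of_mem hs⟩
  · intro p
    obtain ⟨M₀, hM₀⟩ := hne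
    exact Set.mem_sUnion.2 ⟨M₀, hM₀, ((hc hM₀).1).sq p⟩
  · rintro a ⟨Ma, hMa, ha⟩ b ⟨Mb, hMb, hb⟩
    rcases hchain.total hMa hMb with h | h
    · exact ⟨Mb, hMb, ((hc hMb).1).add (h ha) hb⟩
    · exact ⟨Ma, hMa, ((hc hMa).1).add ha (h hb)⟩
  · rintro p a ⟨Ma, hMa, ha⟩
    exact ⟨Ma, hMa, ((hc hMa).1).sq_mul p ha⟩
  · intro p hp
    obtain ⟨M₀, hM₀⟩ := hne
    exact ⟨M₀, hM₀, (hc hM₀).2.1 p hp⟩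
  · rintro ⟨Ma, hMa, ha⟩
    exact (hc hMa).2.2 ha

/-- If `b ∉ M` for a maximal proper quadratic module, then `-1 ∈ M + b·Σ²`. -/
lemma neg_one_eq_of_not_mem {M : Set (MvPolynomial σ ℝ)} (hmax : Maximal (· ∈ QMs g) M)
    {b : MvPolynomial σ ℝ} (hb : b ∉ M) :
    ∃ s ∈ M, ∃ t, IsSOS t ∧ s + b * t = -1 := by
  classical
  obtain ⟨⟨hqm, hQsub, hproper⟩, hmx⟩ := hmax
  set M' : Set (MvPolynomial σ ℝ) := {x | ∃ s ∈ M, ∃ t, IsSOS t ∧ x = s + b * t} with hM'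
  have hsub : M ⊆ M' := fun a ha => ⟨a, ha, 0, sos_zero, by simp⟩
  have hqm' : QM M' := by
    refine ⟨?_, ?_, ?_⟩
    · intro p; exact hsub (hqm.sq p)
    · rintro x ⟨s, hs, t, ht, rfl⟩ y ⟨s', hs', t', ht', rfl⟩
      exact ⟨s + s', hqm.add hs hs', t + t', sos_add ht ht', by ring⟩
    · rintro p x ⟨s, hs, t, ht, rfl⟩
      exact ⟨p ^ 2 * s, hqm.sq_mul p hs, p ^ 2 * t, sos_sq_mul p ht, by ring⟩
  have hbM' : b ∈ M' := ⟨0, hqm.zero, 1, sos_one, by simp⟩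
  by_cases hneg : (-1 : MvPolynomial σ ℝ) ∈ M'
  · obtain ⟨s, hs, t, ht, heq⟩ := hneg
    exact ⟨s, hs, t, ht, heq.symm⟩
  · exfalso
    have : M' ⊆ M := hmx ⟨hqm', fun p hp => hsub (hQsub p hp), hneg⟩ hsub
    exact hb (this hbM')

end PutinarAux

namespace PutinarAux

variable {n : ℕ} {M : Set (MvPolynomial (Fin n) ℝ)}

/-- `a` is bounded with respect to `M`. -/
def Bnd (M : Set (MvPolynomial (Fin n) ℝ)) (a : MvPolynomial (Fin n) ℝ) : Prop :=
  ∃ N : ℝ, 0 < N ∧ C N - a ∈ M ∧ C N + a ∈ M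

lemma QM.raise (hM : QM M) {a : MvPolynomial (Fin n) ℝ} {N N' : ℝ} (hN : N ≤ N')
    (h : C N - a ∈ M) : C N' - a ∈ M := by
  have heq : (C N' - a : MvPolynomial (Fin n) ℝ) = C (N' - N) + (C N - a) := by
    rw [map_sub]; ring
  rw [heq]
  exact hM.add (hM.const (by linarith)) h

lemma QM.half_bound (hM : QM M) {a : MvPolynomial (Fin n) ℝ} {N : ℝ} (hN : 0 ≤ N)
    (h : C N - 2 * a ∈ M) : C N - a ∈ M := by
  have hc : (C (2⁻¹ : ℝ) : MvPolynomial (Fin n) ℝ) * 2 = 1 := by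
    have h2 : ((2 : MvPolynomial (Fin n) ℝ)) = C 2 := (map_ofNat C 2).symm
    rw [h2, ← C_mul]; norm_num
  have heq : (C N - a : MvPolynomial (Fin n) ℝ) =
      C (2⁻¹ : ℝ) * (C N - 2 * a) + C (2⁻¹ : ℝ) * C N := by
    linear_combination (a - C N) * hc
  rw [heq]
  exact hM.add (hM.cmul (by norm_num) h) (hM.cmul (by norm_num) (hM.const hN))

lemma QM.sqbnd (hM : QM M) {a : MvPolynomial (Fin n) ℝ} {N : ℝ} (hN : 0 < N)
    (h1 : C N - a ∈ M) (h2 : C N + a ∈ M) : C (N ^ 2) - a ^ 2 ∈ M := by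
  have hc : (C ((2 * N)⁻¹ : ℝ) : MvPolynomial (Fin n) ℝ) * (2 * C N) = 1 := by
    have h2' : ((2 : MvPolynomial (Fin n) ℝ) * C N) = C (2 * N) := by
      rw [C_mul, map_ofNat]
    rw [h2', ← C_mul, inv_mul_cancel₀ (by positivity)]
    norm_num
  have hsq : (C (N ^ 2) : MvPolynomial (Fin n) ℝ) = C N * C N := by
    rw [← C_mul]; ring_nf
  have heq : (C (N ^ 2) - a ^ 2 : MvPolynomial (Fin n) ℝ) =
      C ((2 * N)⁻¹ : ℝ) * ((C N + a) ^ 2 * (C N - a) + (C N - a) ^ 2 * (C N + a)) := by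
    linear_combination hsq - (C N * C N - a ^ 2) * hc
  rw [heq]
  exact hM.cmul (by positivity)
    (hM.add (hM.sq_mul _ h1) (hM.sq_mul _ h2))

lemma Bnd.sqbnd' (hM : QM M) {a : MvPolynomial (Fin n) ℝ} (h : Bnd M a) :
    ∃ K : ℝ, 0 < K ∧ C K - a ^ 2 ∈ M := by
  obtain ⟨N, hN, h1, h2⟩ := h
  exact ⟨N ^ 2, by positivity, hM.sqbnd hN h1 h2⟩

lemma bnd_const (hM : QM M) (c : ℝ) : Bnd M (C c) := by
  refine ⟨|c| + 1, by positivity, ?_, ?_⟩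
  · rw [show (C (|c| + 1) - C c : MvPolynomial (Fin n) ℝ) = C (|c| + 1 - c) by
      rw [← map_sub]]
    exact hM.const (by cases abs_cases c <;> linarith)
  · rw [show (C (|c| + 1) + C c : MvPolynomial (Fin n) ℝ) = C (|c| + 1 + c) by
      rw [← map_add]]
    exact hM.const (by cases abs_cases c <;> linarith)

lemma Bnd.add (hM : QM M) {a b : MvPolynomial (Fin n) ℝ} (ha : Bnd M a) (hb : Bnd M b) :
    Bnd M (a + b) := by
  obtain ⟨N1, hN1, h1, h2⟩ := ha
  obtain ⟨N2, hN2, h3, h4⟩ := hb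
  refine ⟨N1 + N2, by positivity, ?_, ?_⟩
  · rw [show (C (N1 + N2) - (a + b) : MvPolynomial (Fin n) ℝ)
        = (C N1 - a) + (C N2 - b) by rw [map_add]; ring]
    exact hM.add h1 h3
  · rw [show (C (N1 + N2) + (a + b) : MvPolynomial (Fin n) ℝ)
        = (C N1 + a) + (C N2 + b) by rw [map_add]; ring]
    exact hM.add h2 h4

lemma Bnd.mul (hM : QM M) {a b : MvPolynomial (Fin n) ℝ} (ha : Bnd M a) (hb : Bnd M b) :
    Bnd M (a * b) := by
  obtain ⟨K1, hK1, hs1⟩ := ha.sqbnd' hM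
  obtain ⟨K2, hK2, hs2⟩ := hb.sqbnd' hM
  refine ⟨K1 + K2, by positivity, ?_, ?_⟩
  · refine hM.half_bound (by positivity) ?_
    rw [show (C (K1 + K2) - 2 * (a * b) : MvPolynomial (Fin n) ℝ)
        = (C K1 - a ^ 2) + (C K2 - b ^ 2) + (a - b) ^ 2 by rw [map_add]; ring]
    exact hM.add (hM.add hs1 hs2) (hM.sq _)
  · have h := hM.half_bound (a := -(a*b)) (N := K1 + K2) (by positivity) ?_
    · rw [show (C (K1 + K2) + a * b : MvPolynomial (Fin n) ℝ)
          = C (K1 + K2) - -(a * b) by ring]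
      exact h
    · rw [show (C (K1 + K2) - 2 * -(a * b) : MvPolynomial (Fin n) ℝ)
          = (C K1 - a ^ 2) + (C K2 - b ^ 2) + (a + b) ^ 2 by rw [map_add]; ring]
      exact hM.add (hM.add hs1 hs2) (hM.sq _)

lemma bnd_X (hM : QM M) {R : ℝ} (hR : 0 < R)
    (harch : C R - ∑ i : Fin n, X i ^ 2 ∈ M) (i : Fin n) : Bnd M (X i) := by
  classical
  have hsum : (X i ^ 2 : MvPolynomial (Fin n) ℝ)
      + ∑ j ∈ Finset.univ.erase i, X j ^ 2 = ∑ j : Fin n, X j ^ 2 :=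
    Finset.add_sum_erase _ _ (Finset.mem_univ i)
  have h1 : (C (R + 1) : MvPolynomial (Fin n) ℝ) = C R + 1 := by
    rw [map_add, map_one]
  have hT : (∑ j ∈ Finset.univ.erase i, X j ^ 2 : MvPolynomial (Fin n) ℝ) ∈ M :=
    hM.sum fun j _ => hM.sq _
  refine ⟨R + 1, by positivity, ?_, ?_⟩
  · refine hM.half_bound (by positivity) ?_
    rw [show (C (R + 1) - 2 * X i : MvPolynomial (Fin n) ℝ)
        = (X i - 1) ^ 2 + (C R - ∑ j : Fin n, X j ^ 2)
          + ∑ j ∈ Finset.univ.erase i, X j ^ 2 by linear_combination h1 - hsum]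
    exact hM.add (hM.add (hM.sq _) harch) hT
  · have h := hM.half_bound (a := -(X i)) (N := R + 1) (by positivity) ?_
    · rw [show (C (R + 1) + X i : MvPolynomial (Fin n) ℝ) = C (R + 1) - -(X i) by ring]
      exact h
    · rw [show (C (R + 1) - 2 * -(X i) : MvPolynomial (Fin n) ℝ)
          = (X i + 1) ^ 2 + (C R - ∑ j : Fin n, X j ^ 2)
            + ∑ j ∈ Finset.univ.erase i, X j ^ 2 by linear_combination h1 - hsum]
      exact hM.add (hM.add (hM.sq _) harch) hT

lemma bndAll (hM : QM M) {R : ℝ} (hR : 0 < R)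
    (harch : C R - ∑ i : Fin n, X i ^ 2 ∈ M) (a : MvPolynomial (Fin n) ℝ) : Bnd M a := by
  induction a using MvPolynomial.induction_on with
  | C c => exact bnd_const hM c
  | add p q hp hq => exact hp.add hM hq
  | mul_X p i hp => exact hp.mul hM (bnd_X hM hR harch i)

end PutinarAux

namespace PutinarAux

variable {n m : ℕ} {g : Fin m → MvPolynomial (Fin n) ℝ} {M : Set (MvPolynomial (Fin n) ℝ)}

lemma dichotomy (hmax : Maximal (· ∈ QMs g) M) {R : ℝ} (hR : 0 < R)
    (harch : C R - ∑ i : Fin n, X i ^ 2 ∈ M) (a : MvPolynomial (Fin n) ℝ) :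
    a ∈ M ∨ -a ∈ M := by
  by_contra hcon
  push_neg at hcon
  obtain ⟨ha, hna⟩ := hcon
  have hqm : QM M := hmax.1.1
  have hproper : (-1 : MvPolynomial (Fin n) ℝ) ∉ M := hmax.1.2.2
  obtain ⟨s, hs, σ, hσ, h1⟩ := neg_one_eq_of_not_mem hmax ha
  obtain ⟨t, ht, τ, hτ, h2⟩ := neg_one_eq_of_not_mem hmax hna
  -- h1 : s + a * σ = -1, h2 : t + (-a) * τ = -1
  have hσ2 : -σ ^ 2 ∈ M := by
    have heq : (-σ ^ 2 : MvPolynomial (Fin n) ℝ)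
        = σ ^ 2 * t + (σ * τ + σ * (τ * s)) := by
      linear_combination (-(σ * τ)) * h1 - σ ^ 2 * h2
    rw [heq]
    exact hqm.add (hqm.sq_mul σ ht)
      (hqm.add (hqm.sos_mul hσ (hqm.sos hτ)) (hqm.sos_mul hσ (hqm.sos_mul hτ hs)))
  have hτ2 : -τ ^ 2 ∈ M := by
    have heq : (-τ ^ 2 : MvPolynomial (Fin n) ℝ)
        = τ ^ 2 * s + (σ * τ + τ * (σ * t)) := by
      linear_combination (-τ ^ 2) * h1 - (σ * τ) * h2
    rw [heq]
    exact hqm.add (hqm.sq_mul τ hs)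
      (hqm.add (hqm.sos_mul hσ (hqm.sos hτ)) (hqm.sos_mul hτ (hqm.sos_mul hσ ht)))
  set d : MvPolynomial (Fin n) ℝ := τ - σ with hd
  have hd2 : -d ^ 2 ∈ M := by
    have heq : (-d ^ 2 : MvPolynomial (Fin n) ℝ)
        = (σ + τ) ^ 2 + ((-σ ^ 2 + -σ ^ 2) + (-τ ^ 2 + -τ ^ 2)) := by
      rw [hd]; ring
    rw [heq]
    exact hqm.add (hqm.sq _) (hqm.add (hqm.add hσ2 hσ2) (hqm.add hτ2 hτ2))
  have had : a * d - 2 ∈ M := by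
    have heq : (a * d - 2 : MvPolynomial (Fin n) ℝ) = s + t := by
      rw [hd]; linear_combination -h1 - h2
    rw [heq]
    exact hqm.add hs ht
  obtain ⟨N, hN, hN1, hN2⟩ := bndAll hqm hR harch a
  have hNsq : C (N ^ 2) - a ^ 2 ∈ M := hqm.sqbnd hN hN1 hN2
  have hadsq : -(a * d) ^ 2 ∈ M := by
    have heq : (-(a * d) ^ 2 : MvPolynomial (Fin n) ℝ)
        = d ^ 2 * (C (N ^ 2) - a ^ 2) + C (N ^ 2) * (-d ^ 2) := by ring
    rw [heq]
    exact hqm.add (hqm.sq_mul d hNsq) (hqm.cmul (sq_nonneg N) hd2)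
  have hfin : (-4 : MvPolynomial (Fin n) ℝ) ∈ M := by
    have heq : (-4 : MvPolynomial (Fin n) ℝ)
        = (a * d - 2) ^ 2 + (-(a * d) ^ 2)
          + ((a * d - 2) + (a * d - 2) + ((a * d - 2) + (a * d - 2))) := by ring
    rw [heq]
    exact hqm.add (hqm.add (hqm.sq _) hadsq)
      (hqm.add (hqm.add had had) (hqm.add had had))
  have hC4 : (C (-4 : ℝ) : MvPolynomial (Fin n) ℝ) = -4 := by
    rw [map_neg, map_ofNat]
  exact hproper (hqm.neg_one_of_neg_const (c := (-4 : ℝ)) (by norm_num) (by rw [hC4]; exact hfin))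

end PutinarAux

namespace PutinarAux

variable {n m : ℕ} {g : Fin m → MvPolynomial (Fin n) ℝ} {M : Set (MvPolynomial (Fin n) ℝ)}

/-- The functional attached to a maximal proper quadratic module. -/
def phi (M : Set (MvPolynomial (Fin n) ℝ)) (a : MvPolynomial (Fin n) ℝ) : ℝ :=
  sSup {r : ℝ | a - C r ∈ M}

lemma const_nonneg (hqm : QM M) (hproper : (-1 : MvPolynomial (Fin n) ℝ) ∉ M) {c : ℝ}
    (h : (C c : MvPolynomial (Fin n) ℝ) ∈ M) : 0 ≤ c := by
  by_contra hc
  exact hproper (hqm.neg_one_of_neg_const (by linarith) h)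

lemma le_of_mems (hqm : QM M) (hproper : (-1 : MvPolynomial (Fin n) ℝ) ∉ M)
    {a : MvPolynomial (Fin n) ℝ} {r u : ℝ} (h1 : a - C r ∈ M) (h2 : C u - a ∈ M) :
    r ≤ u := by
  have h3 : (C (u - r) : MvPolynomial (Fin n) ℝ) = (C u - a) + (a - C r) := by
    rw [map_sub]; ring
  have := const_nonneg hqm hproper (h3 ▸ hqm.add h2 h1)
  linarith

lemma Lne (hbnd : ∀ a, Bnd M a) (a : MvPolynomial (Fin n) ℝ) :
    Set.Nonempty {r : ℝ | a - C r ∈ M} := by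
  obtain ⟨N, hN, h1, h2⟩ := hbnd a
  refine ⟨-N, ?_⟩
  have : a - C (-N) = C N + a := by rw [map_neg]; ring
  rw [Set.mem_setOf_eq, this]
  exact h2

lemma Lbdd (hqm : QM M) (hproper : (-1 : MvPolynomial (Fin n) ℝ) ∉ M)
    (hbnd : ∀ a, Bnd M a) (a : MvPolynomial (Fin n) ℝ) :
    BddAbove {r : ℝ | a - C r ∈ M} := by
  obtain ⟨N, hN, h1, h2⟩ := hbnd a
  exact ⟨N, fun r hr => le_of_mems hqm hproper hr h1⟩

lemma phi_lb (hqm : QM M) (hproper : (-1 : MvPolynomial (Fin n) ℝ) ∉ M)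
    (hbnd : ∀ a, Bnd M a) {a : MvPolynomial (Fin n) ℝ} {r : ℝ}
    (h : a - C r ∈ M) : r ≤ phi M a :=
  le_csSup (Lbdd hqm hproper hbnd a) h

lemma phi_ub (hqm : QM M) (hproper : (-1 : MvPolynomial (Fin n) ℝ) ∉ M)
    (hbnd : ∀ a, Bnd M a) {a : MvPolynomial (Fin n) ℝ} {u : ℝ}
    (h : C u - a ∈ M) : phi M a ≤ u :=
  csSup_le (Lne hbnd a) fun r hr => le_of_mems hqm hproper hr h

lemma phi_key1 (hqm : QM M) (hproper : (-1 : MvPolynomial (Fin n) ℝ) ∉ M)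
    (hbnd : ∀ a, Bnd M a) (a : MvPolynomial (Fin n) ℝ) {ε : ℝ} (hε : 0 < ε) :
    a - C (phi M a - ε) ∈ M := by
  obtain ⟨r, hr, hlt⟩ := exists_lt_of_lt_csSup (Lne hbnd a)
    (show phi M a - ε < sSup {r : ℝ | a - C r ∈ M} by
      have : phi M a - ε < phi M a := by linarith
      exact this)
  have heq : a - C (phi M a - ε) = (a - C r) + C (r - (phi M a - ε)) := by
    simp only [map_sub]; ring
  rw [heq]
  exact hqm.add hr (hqm.const (by linarith))

lemma phi_key2 (hqm : QM M) (hproper : (-1 : MvPolynomial (Fin n) ℝ) ∉ M)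
    (hbnd : ∀ a, Bnd M a) (hdich : ∀ a, a ∈ M ∨ -a ∈ M)
    (a : MvPolynomial (Fin n) ℝ) {ε : ℝ} (hε : 0 < ε) :
    C (phi M a + ε) - a ∈ M := by
  rcases hdich (C (phi M a + ε) - a) with h | h
  · exact h
  · exfalso
    have h' : a - C (phi M a + ε) ∈ M := by
      rwa [show a - C (phi M a + ε) = -(C (phi M a + ε) - a) by ring]
    have := phi_lb hqm hproper hbnd h'
    linarith

lemma phi_C (hqm : QM M) (hproper : (-1 : MvPolynomial (Fin n) ℝ) ∉ M)
    (hbnd : ∀ a, Bnd M a) (c : ℝ) : phi M (C c) = c := by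
  refine le_antisymm (phi_ub hqm hproper hbnd ?_) (phi_lb hqm hproper hbnd ?_)
  · simpa using hqm.zero
  · simpa using hqm.zero

lemma phi_add (hqm : QM M) (hproper : (-1 : MvPolynomial (Fin n) ℝ) ∉ M)
    (hbnd : ∀ a, Bnd M a) (hdich : ∀ a, a ∈ M ∨ -a ∈ M)
    (a b : MvPolynomial (Fin n) ℝ) : phi M (a + b) = phi M a + phi M b := by
  have hle : phi M (a + b) ≤ phi M a + phi M b := by
    refine le_of_forall_pos_le_add fun ε hε => ?_
    have h1 := phi_key2 hqm hproper hbnd hdich a (half_pos hε)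
    have h2 := phi_key2 hqm hproper hbnd hdich b (half_pos hε)
    have heq : C (phi M a + phi M b + ε) - (a + b)
        = (C (phi M a + ε / 2) - a) + (C (phi M b + ε / 2) - b) := by
      rw [show (phi M a + phi M b + ε) = (phi M a + ε/2) + (phi M b + ε/2) by ring,
        map_add]; ring
    have := phi_ub hqm hproper hbnd (heq ▸ hqm.add h1 h2)
    linarith
  have hge : phi M a + phi M b ≤ phi M (a + b) := by
    refine le_of_forall_pos_le_add fun ε hε => ?_
    have h1 := phi_key1 hqm hproper hbnd a (half_pos hε)
    have h2 := phi_key1 hqm hproper hbnd b (half_pos hε)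
    have heq : (a + b) - C (phi M a + phi M b - ε)
        = (a - C (phi M a - ε / 2)) + (b - C (phi M b - ε / 2)) := by
      rw [show (phi M a + phi M b - ε) = (phi M a - ε/2) + (phi M b - ε/2) by ring,
        map_add]; ring
    have := phi_lb hqm hproper hbnd (heq ▸ hqm.add h1 h2)
    linarith
  linarith

end PutinarAux

namespace PutinarAux

variable {n : ℕ} {M : Set (MvPolynomial (Fin n) ℝ)}

/-- Cross-term bound: if `|b'| ≤ ε` in the `M`-order, then `|c·b'| ≤ |c|ε`. -/
lemma cross (hqm : QM M) {b' : MvPolynomial (Fin n) ℝ} {ε : ℝ} (c : ℝ)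
    (h1 : C ε - b' ∈ M) (h2 : C ε + b' ∈ M) :
    C (|c| * ε) - C c * b' ∈ M ∧ C (|c| * ε) + C c * b' ∈ M := by
  rcases le_or_gt 0 c with hc | hc
  · rw [abs_of_nonneg hc]
    constructor
    · rw [show (C (c * ε) - C c * b' : MvPolynomial (Fin n) ℝ) = C c * (C ε - b') by
        rw [C_mul]; ring]
      exact hqm.cmul hc h1
    · rw [show (C (c * ε) + C c * b' : MvPolynomial (Fin n) ℝ) = C c * (C ε + b') by
        rw [C_mul]; ring]
      exact hqm.cmul hc h2
  · rw [abs_of_neg hc]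
    constructor
    · rw [show (C (-c * ε) - C c * b' : MvPolynomial (Fin n) ℝ) = C (-c) * (C ε + b') by
        rw [C_mul, map_neg]; ring]
      exact hqm.cmul (by linarith) h2
    · rw [show (C (-c * ε) + C c * b' : MvPolynomial (Fin n) ℝ) = C (-c) * (C ε - b') by
        rw [C_mul, map_neg]; ring]
      exact hqm.cmul (by linarith) h1

/-- Product bound: if `|a'|, |b'| ≤ ε` in the `M`-order, then `|a'b'| ≤ 2ε²`. -/
lemma prod_eps (hqm : QM M) {a' b' : MvPolynomial (Fin n) ℝ} {ε : ℝ} (hε : 0 < ε)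
    (ha1 : C ε - a' ∈ M) (ha2 : C ε + a' ∈ M)
    (hb1 : C ε - b' ∈ M) (hb2 : C ε + b' ∈ M) :
    C (2 * ε ^ 2) - a' * b' ∈ M ∧ C (2 * ε ^ 2) + a' * b' ∈ M := by
  have hsa : C (ε ^ 2) - a' ^ 2 ∈ M := hqm.sqbnd hε ha1 ha2
  have hsb : C (ε ^ 2) - b' ^ 2 ∈ M := hqm.sqbnd hε hb1 hb2
  constructor
  · refine hqm.half_bound (by positivity) ?_
    rw [show (C (2 * ε ^ 2) - 2 * (a' * b') : MvPolynomial (Fin n) ℝ)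
        = (C (ε ^ 2) - a' ^ 2) + (C (ε ^ 2) - b' ^ 2) + (a' - b') ^ 2 by
      rw [show (2 * ε ^ 2) = ε ^ 2 + ε ^ 2 by ring, map_add]; ring]
    exact hqm.add (hqm.add hsa hsb) (hqm.sq _)
  · have h := hqm.half_bound (a := -(a' * b')) (N := 2 * ε ^ 2) (by positivity) ?_
    · rwa [show (C (2 * ε ^ 2) - -(a' * b') : MvPolynomial (Fin n) ℝ)
          = C (2 * ε ^ 2) + a' * b' by ring] at h
    · rw [show (C (2 * ε ^ 2) - 2 * -(a' * b') : MvPolynomial (Fin n) ℝ)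
          = (C (ε ^ 2) - a' ^ 2) + (C (ε ^ 2) - b' ^ 2) + (a' + b') ^ 2 by
        rw [show (2 * ε ^ 2) = ε ^ 2 + ε ^ 2 by ring, map_add]; ring]
      exact hqm.add (hqm.add hsa hsb) (hqm.sq _)

lemma phi_mul (hqm : QM M) (hproper : (-1 : MvPolynomial (Fin n) ℝ) ∉ M)
    (hbnd : ∀ a, Bnd M a) (hdich : ∀ a, a ∈ M ∨ -a ∈ M)
    (a b : MvPolynomial (Fin n) ℝ) : phi M (a * b) = phi M a * phi M b := by
  set α := phi M a with hα
  set β := phi M b with hβ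
  -- for every ε > 0 we obtain a two-sided bound
  have key : ∀ ε : ℝ, 0 < ε →
      phi M (a * b) ≤ α * β + (2 * ε ^ 2 + |α| * ε + |β| * ε) ∧
      α * β - (2 * ε ^ 2 + |α| * ε + |β| * ε) ≤ phi M (a * b) := by
    intro ε hε
    set a' : MvPolynomial (Fin n) ℝ := a - C α with ha'
    set b' : MvPolynomial (Fin n) ℝ := b - C β with hb'
    have hA1 : C ε - a' ∈ M := by
      have := phi_key2 hqm hproper hbnd hdich a hε
      rwa [show C ε - a' = C (α + ε) - a by rw [ha', map_add]; ring]
    have hA2 : C ε + a' ∈ M := by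
      have := phi_key1 hqm hproper hbnd a hε
      rwa [show C ε + a' = a - C (α - ε) by rw [ha', map_sub]; ring]
    have hB1 : C ε - b' ∈ M := by
      have := phi_key2 hqm hproper hbnd hdich b hε
      rwa [show C ε - b' = C (β + ε) - b by rw [hb', map_add]; ring]
    have hB2 : C ε + b' ∈ M := by
      have := phi_key1 hqm hproper hbnd b hε
      rwa [show C ε + b' = b - C (β - ε) by rw [hb', map_sub]; ring]
    obtain ⟨hP1, hP2⟩ := prod_eps hqm hε hA1 hA2 hB1 hB2
    obtain ⟨hX1, hX2⟩ := cross hqm α hB1 hB2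
    obtain ⟨hY1, hY2⟩ := cross hqm β hA1 hA2
    have hsplit : (C (α * β + (2 * ε ^ 2 + |α| * ε + |β| * ε)) : MvPolynomial (Fin n) ℝ)
        = C α * C β + C (2 * ε ^ 2) + C (|α| * ε) + C (|β| * ε) := by
      rw [show α * β + (2 * ε ^ 2 + |α| * ε + |β| * ε)
          = α * β + 2 * ε ^ 2 + |α| * ε + |β| * ε by ring,
        map_add, map_add, map_add, C_mul]
    have hsplit2 : (C (α * β - (2 * ε ^ 2 + |α| * ε + |β| * ε)) : MvPolynomial (Fin n) ℝ)
        = C α * C β - C (2 * ε ^ 2) - C (|α| * ε) - C (|β| * ε) := by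
      rw [show α * β - (2 * ε ^ 2 + |α| * ε + |β| * ε)
          = α * β - 2 * ε ^ 2 - |α| * ε - |β| * ε by ring,
        map_sub, map_sub, map_sub, C_mul]
    constructor
    · refine phi_ub hqm hproper hbnd (a := a * b) ?_
      rw [show C (α * β + (2 * ε ^ 2 + |α| * ε + |β| * ε)) - a * b
          = (C (2 * ε ^ 2) - a' * b') + (C (|α| * ε) - C α * b')
            + (C (|β| * ε) - C β * a') by
        rw [hsplit, ha', hb']; ring]
      exact hqm.add (hqm.add hP1 hX1) hY1
    · refine phi_lb hqm hproper hbnd (a := a * b) ?_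
      rw [show a * b - C (α * β - (2 * ε ^ 2 + |α| * ε + |β| * ε))
          = (C (2 * ε ^ 2) + a' * b') + (C (|α| * ε) + C α * b')
            + (C (|β| * ε) + C β * a') by
        rw [hsplit2, ha', hb']; ring]
      exact hqm.add (hqm.add hP2 hX2) hY2
  refine le_antisymm ?_ ?_
  · refine le_of_forall_pos_le_add fun η hη => ?_
    set ε : ℝ := min 1 (η / (2 + |α| + |β|)) with hεdef
    have hεpos : 0 < ε := lt_min one_pos (by positivity)
    have hε1 : ε ≤ 1 := min_le_left _ _
    have hε2 : ε ≤ η / (2 + |α| + |β|) := min_le_right _ _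
    have hbound := (key ε hεpos).1
    have habs : 2 * ε ^ 2 + |α| * ε + |β| * ε ≤ η := by
      have h1 : ε ^ 2 ≤ ε := by nlinarith
      have h2 : ε * (2 + |α| + |β|) ≤ η := by
        have := mul_le_mul_of_nonneg_right hε2 (le_of_lt (show (0:ℝ) < 2 + |α| + |β| by positivity))
        calc ε * (2 + |α| + |β|) ≤ (η / (2 + |α| + |β|)) * (2 + |α| + |β|) := by
              apply mul_le_mul_of_nonneg_right hε2; positivity
          _ = η := by field_simp
      nlinarith [abs_nonneg α, abs_nonneg β]
    linarith
  · refine le_of_forall_pos_le_add fun η hη => ?_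
    set ε : ℝ := min 1 (η / (2 + |α| + |β|)) with hεdef
    have hεpos : 0 < ε := lt_min one_pos (by positivity)
    have hε1 : ε ≤ 1 := min_le_left _ _
    have hε2 : ε ≤ η / (2 + |α| + |β|) := min_le_right _ _
    have hbound := (key ε hεpos).2
    have habs : 2 * ε ^ 2 + |α| * ε + |β| * ε ≤ η := by
      have h1 : ε ^ 2 ≤ ε := by nlinarith
      calc 2 * ε ^ 2 + |α| * ε + |β| * ε ≤ ε * (2 + |α| + |β|) := by
            nlinarith [abs_nonneg α, abs_nonneg β]
        _ ≤ (η / (2 + |α| + |β|)) * (2 + |α| + |β|) := by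
            apply mul_le_mul_of_nonneg_right hε2; positivity
        _ = η := by field_simp
    linarith

end PutinarAux

/-- If `S(g)` satisfies the Archimedean condition and `S(g) = ∅`, then `−1 ∈ Q(g)`. -/
theorem neg_one_mem_QM_of_archimedean_empty {n m : ℕ} (g : Fin m → MvPolynomial (Fin n) ℝ)
    (harch : ArchCond g) (hempty : Sg g = ∅) :
    InQM g (-1) := by
  classical
  by_contra hg
  obtain ⟨M, hmax⟩ := PutinarAux.exists_maximal hg
  have hqm : PutinarAux.QM M := hmax.1.1
  have hQ : ∀ p, InQM g p → p ∈ M := hmax.1.2.1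
  have hproper : (-1 : MvPolynomial (Fin n) ℝ) ∉ M := hmax.1.2.2
  obtain ⟨R, hR, hRQ⟩ := harch
  have harchM : C R - ∑ i : Fin n, X i ^ 2 ∈ M := hQ _ hRQ
  have hbnd : ∀ a, PutinarAux.Bnd M a := PutinarAux.bndAll hqm hR harchM
  have hdich : ∀ a : MvPolynomial (Fin n) ℝ, a ∈ M ∨ -a ∈ M :=
    PutinarAux.dichotomy hmax hR harchM
  set x₀ : Fin n → ℝ := fun i => PutinarAux.phi M (X i) with hx₀
  have heval : ∀ p : MvPolynomial (Fin n) ℝ, eval x₀ p = PutinarAux.phi M p := by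
    intro p
    induction p using MvPolynomial.induction_on with
    | C c => simp [PutinarAux.phi_C hqm hproper hbnd c]
    | add p q hp hq =>
        rw [map_add, hp, hq, PutinarAux.phi_add hqm hproper hbnd hdich]
    | mul_X p i hp =>
        rw [map_mul, hp, PutinarAux.phi_mul hqm hproper hbnd hdich, eval_X]
  have hx : x₀ ∈ Sg g := by
    intro j
    rw [heval]
    have hgj : g j ∈ M := hQ _ (PutinarAux.inQM_g j)
    refine le_trans (le_refl 0) (PutinarAux.phi_lb hqm hproper hbnd ?_)
    simpa using hgj
  rw [Set.eq_empty_iff_forall_notMem] at hempty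
  exact hempty x₀ hx
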